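/- Miranda's theorem in dimension 2: let W = (W₁, W₂) : [r,R] × [r,R] → ℝ² be continuous with W₁(r,β) > 0 and W₁(R,β) < 0 for all β ∈ [r,R], and W₂(α,r) > 0 and W₂(α,R) < 0 for all α ∈ [r,R]. Then there exists (α₀,β₀) ∈ [r,R] × [r,R] with W(α₀,β₀) = (0,0). -/
import Mathlib


open Set

open Finset in
/-- Discrete Miranda lemma via a telescoping "winding" sum: given a labelling of the
`(n+1) × (n+1)` grid by `{0,1,2}` with Miranda-type boundary conditions, some cell
has all three labels among its corners. -/
lemma discrete_miranda (n : ℕ) (hn : 0 < n) (ℓ : ℕ → ℕ → ℕ)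
    (hle : ∀ i j, i ≤ n → j ≤ n → ℓ i j ≤ 2)
    (hleft : ∀ j ≤ n, ℓ 0 j = 0)
    (hright : ∀ j ≤ n, ℓ n j ≠ 0)
    (hbot : ∀ i ≤ n, ℓ i 0 ≤ 1)
    (htop : ∀ i ≤ n, ℓ i n ≠ 1) :
    ∃ i < n, ∃ j < n,
      ∃ a ∈ ({(i,j),(i+1,j),(i+1,j+1),(i,j+1)} : Finset (ℕ×ℕ)),
      ∃ b ∈ ({(i,j),(i+1,j),(i+1,j+1),(i,j+1)} : Finset (ℕ×ℕ)),
      ∃ c ∈ ({(i,j),(i+1,j),(i+1,j+1),(i,j+1)} : Finset (ℕ×ℕ)),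
        ℓ a.1 a.2 = 0 ∧ ℓ b.1 b.2 = 1 ∧ ℓ c.1 c.2 = 2 := by
  classical
  -- edge weight: +1 for a 0→1 transition, -1 for a 1→0 transition
  set f : ℕ×ℕ → ℕ×ℕ → ℤ := fun u v =>
    (if ℓ u.1 u.2 = 0 ∧ ℓ v.1 v.2 = 1 then (1:ℤ) else 0)
    - (if ℓ u.1 u.2 = 1 ∧ ℓ v.1 v.2 = 0 then (1:ℤ) else 0) with hf
  have hanti : ∀ u v, f u v = - f v u := by
    intro u v
    simp only [hf]
    by_cases h1 : ℓ u.1 u.2 = 0 <;> by_cases h2 : ℓ u.1 u.2 = 1 <;>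
      by_cases h3 : ℓ v.1 v.2 = 0 <;> by_cases h4 : ℓ v.1 v.2 = 1 <;>
      simp_all
  -- horizontal and vertical directed edge weights
  set hE : ℕ → ℕ → ℤ := fun i j => f (i,j) (i+1,j) with hhE
  set vE : ℕ → ℕ → ℤ := fun i j => f (i,j) (i,j+1) with hvE
  -- counterclockwise boundary sum around cell (i,j)
  set g : ℕ → ℕ → ℤ := fun i j =>
    f (i,j) (i+1,j) + f (i+1,j) (i+1,j+1) + f (i+1,j+1) (i,j+1) + f (i,j+1) (i,j)
    with hg
  have hgsplit : ∀ i j, g i j = (hE i j - hE i (j+1)) + (vE (i+1) j - vE i j) := by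
    intro i j
    simp only [hg, hhE, hvE]
    rw [hanti (i+1,j+1) (i,j+1), hanti (i,j+1) (i,j)]
    ring
  -- the total sum equals 1
  have hsum : ∑ i ∈ range n, ∑ j ∈ range n, g i j = 1 := by
    have h1 : ∀ i ∈ range n, ∑ j ∈ range n, (hE i j - hE i (j+1)) = hE i 0 - hE i n := by
      intro i _
      exact Finset.sum_range_sub' (fun j => hE i j) n
    have h2 : ∀ j ∈ range n, ∑ i ∈ range n, (vE (i+1) j - vE i j) = vE n j - vE 0 j := by
      intro j _
      exact Finset.sum_range_sub (fun i => vE i j) n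
    calc ∑ i ∈ range n, ∑ j ∈ range n, g i j
        = ∑ i ∈ range n, ∑ j ∈ range n, ((hE i j - hE i (j+1)) + (vE (i+1) j - vE i j)) := by
          simp only [hgsplit]
      _ = (∑ i ∈ range n, ∑ j ∈ range n, (hE i j - hE i (j+1)))
          + ∑ i ∈ range n, ∑ j ∈ range n, (vE (i+1) j - vE i j) := by
          rw [← Finset.sum_add_distrib]
          apply Finset.sum_congr rfl
          intro i _
          rw [← Finset.sum_add_distrib]
      _ = (∑ i ∈ range n, ∑ j ∈ range n, (hE i j - hE i (j+1)))
          + ∑ j ∈ range n, ∑ i ∈ range n, (vE (i+1) j - vE i j) := by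
          rw [Finset.sum_comm (s := range n) (t := range n)
            (f := fun i j => (vE (i+1) j - vE i j))]
      _ = (∑ i ∈ range n, (hE i 0 - hE i n)) + ∑ j ∈ range n, (vE n j - vE 0 j) := by
          rw [Finset.sum_congr rfl h1, Finset.sum_congr rfl h2]
      _ = 1 := by
          have hEtop : ∀ i ∈ range n, hE i n = 0 := by
            intro i hi
            have hi' : i < n := Finset.mem_range.mp hi
            have t1 := htop i (le_of_lt hi')
            have t2 := htop (i+1) hi'
            simp [hhE, hf, t1, t2]
          have hvR : ∀ j ∈ range n, vE n j = 0 := by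
            intro j hj
            have hj' : j < n := Finset.mem_range.mp hj
            have t1 := hright j (le_of_lt hj')
            have t2 := hright (j+1) hj'
            simp [hvE, hf, t1, t2]
          have hvL : ∀ j ∈ range n, vE 0 j = 0 := by
            intro j hj
            have hj' : j < n := Finset.mem_range.mp hj
            have t1 := hleft j (le_of_lt hj')
            have t2 := hleft (j+1) hj'
            simp [hvE, hf, t1, t2]
          -- bottom row telescopes via m
          set m : ℕ → ℤ := fun i => if ℓ i 0 = 0 then 0 else 1 with hm
          have hEbot : ∀ i ∈ range n, hE i 0 = m (i+1) - m i := by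
            intro i hi
            have hi' : i < n := Finset.mem_range.mp hi
            have b1 := hbot i (le_of_lt hi')
            have b2 := hbot (i+1) hi'
            have e1 : ℓ i 0 = 0 ∨ ℓ i 0 = 1 := by omega
            have e2 : ℓ (i+1) 0 = 0 ∨ ℓ (i+1) 0 = 1 := by omega
            rcases e1 with e1 | e1 <;> rcases e2 with e2 | e2 <;>
              simp [hhE, hf, hm, e1, e2]
          have hb : ∑ i ∈ range n, hE i 0 = 1 := by
            rw [Finset.sum_congr rfl hEbot, Finset.sum_range_sub m n]
            have m0 : m 0 = 0 := by simp [hm, hleft 0 (Nat.zero_le n)]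
            have mn : m n = 1 := by simp [hm, hright 0 (Nat.zero_le n)]
            rw [m0, mn]; ring
          have e1 : ∑ i ∈ range n, (hE i 0 - hE i n) = ∑ i ∈ range n, hE i 0 := by
            apply Finset.sum_congr rfl
            intro i hi
            rw [hEtop i hi]
            ring
          have e2 : ∑ j ∈ range n, (vE n j - vE 0 j) = 0 := by
            apply Finset.sum_eq_zero
            intro j hj
            rw [hvR j hj, hvL j hj]
            ring
          rw [e1, e2, hb]
          ring
  -- some cell has nonzero boundary sum
  have hex : ∃ i ∈ range n, ∃ j ∈ range n, g i j ≠ 0 := by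
    by_contra hcon
    push_neg at hcon
    have : ∑ i ∈ range n, ∑ j ∈ range n, g i j = 0 := by
      apply Finset.sum_eq_zero
      intro i hi
      exact Finset.sum_eq_zero (fun j hj => hcon i hi j hj)
    rw [hsum] at this
    exact one_ne_zero this
  obtain ⟨i, hi, j, hj, hgij⟩ := hex
  have hi' : i < n := Finset.mem_range.mp hi
  have hj' : j < n := Finset.mem_range.mp hj
  set C : Finset (ℕ×ℕ) := {(i,j),(i+1,j),(i+1,j+1),(i,j+1)} with hC
  -- the cell must contain a label-0 corner
  have hA : ∃ a ∈ C, ℓ a.1 a.2 = 0 := by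
    by_contra hcon
    push_neg at hcon
    apply hgij
    have c1 : ℓ i j ≠ 0 := hcon (i,j) (by simp [hC])
    have c2 : ℓ (i+1) j ≠ 0 := hcon (i+1,j) (by simp [hC])
    have c3 : ℓ (i+1) (j+1) ≠ 0 := hcon (i+1,j+1) (by simp [hC])
    have c4 : ℓ i (j+1) ≠ 0 := hcon (i,j+1) (by simp [hC])
    simp [hg, hf, c1, c2, c3, c4]
  -- and a label-1 corner
  have hB : ∃ b ∈ C, ℓ b.1 b.2 = 1 := by
    by_contra hcon
    push_neg at hcon
    apply hgij
    have c1 : ℓ i j ≠ 1 := hcon (i,j) (by simp [hC])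
    have c2 : ℓ (i+1) j ≠ 1 := hcon (i+1,j) (by simp [hC])
    have c3 : ℓ (i+1) (j+1) ≠ 1 := hcon (i+1,j+1) (by simp [hC])
    have c4 : ℓ i (j+1) ≠ 1 := hcon (i,j+1) (by simp [hC])
    simp [hg, hf, c1, c2, c3, c4]
  -- and a label-2 corner
  have hD : ∃ c ∈ C, ℓ c.1 c.2 = 2 := by
    by_contra hcon
    push_neg at hcon
    apply hgij
    have c1 : ℓ i j ≠ 2 := hcon (i,j) (by simp [hC])
    have c2 : ℓ (i+1) j ≠ 2 := hcon (i+1,j) (by simp [hC])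
    have c3 : ℓ (i+1) (j+1) ≠ 2 := hcon (i+1,j+1) (by simp [hC])
    have c4 : ℓ i (j+1) ≠ 2 := hcon (i,j+1) (by simp [hC])
    have l1 : ℓ i j ≤ 2 := hle i j (by omega) (by omega)
    have l2 : ℓ (i+1) j ≤ 2 := hle (i+1) j (by omega) (by omega)
    have l3 : ℓ (i+1) (j+1) ≤ 2 := hle (i+1) (j+1) (by omega) (by omega)
    have l4 : ℓ i (j+1) ≤ 2 := hle i (j+1) (by omega) (by omega)
    have e1 : ℓ i j = 0 ∨ ℓ i j = 1 := by omega
    have e2 : ℓ (i+1) j = 0 ∨ ℓ (i+1) j = 1 := by omega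
    have e3 : ℓ (i+1) (j+1) = 0 ∨ ℓ (i+1) (j+1) = 1 := by omega
    have e4 : ℓ i (j+1) = 0 ∨ ℓ i (j+1) = 1 := by omega
    rcases e1 with e1 | e1 <;> rcases e2 with e2 | e2 <;>
      rcases e3 with e3 | e3 <;> rcases e4 with e4 | e4 <;>
      · simp [hg, hf, e1, e2, e3, e4]
  obtain ⟨a, ha, hℓa⟩ := hA
  obtain ⟨b, hb, hℓb⟩ := hB
  obtain ⟨c, hc, hℓc⟩ := hD
  exact ⟨i, hi', j, hj', a, ha, b, hb, c, hc, hℓa, hℓb, hℓc⟩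

theorem stmt_3 (r R : ℝ) (hr : 0 < r) (hrR : r < R)
    (W₁ W₂ : ℝ × ℝ → ℝ)
    (hW₁ : ContinuousOn W₁ (Icc r R ×ˢ Icc r R))
    (hW₂ : ContinuousOn W₂ (Icc r R ×ˢ Icc r R))
    (h1r : ∀ β ∈ Icc r R, 0 < W₁ (r, β))
    (h1R : ∀ β ∈ Icc r R, W₁ (R, β) < 0)
    (h2r : ∀ α ∈ Icc r R, 0 < W₂ (α, r))
    (h2R : ∀ α ∈ Icc r R, W₂ (α, R) < 0) :
    ∃ p ∈ Icc r R ×ˢ Icc r R, W₁ p = 0 ∧ W₂ p = 0 := by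
  classical
  set K : Set (ℝ × ℝ) := Icc r R ×ˢ Icc r R with hKdef
  have hK : IsCompact K := isCompact_Icc.prod isCompact_Icc
  have hrr : (r, r) ∈ K := by
    constructor <;> exact ⟨le_refl r, le_of_lt hrR⟩
  have hKne : K.Nonempty := ⟨(r, r), hrr⟩
  -- Step 1: approximate zeros at every scale ε > 0.
  have approx : ∀ ε > (0:ℝ), ∃ p ∈ K, |W₁ p| < ε ∧ |W₂ p| < ε := by
    intro ε hε
    obtain ⟨δ₁, hδ₁, hu1⟩ := Metric.uniformContinuousOn_iff.mp
      (hK.uniformContinuousOn_of_continuous hW₁) ε hε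
    obtain ⟨δ₂, hδ₂, hu2⟩ := Metric.uniformContinuousOn_iff.mp
      (hK.uniformContinuousOn_of_continuous hW₂) ε hε
    set δ : ℝ := min δ₁ δ₂ with hδdef
    have hδ : 0 < δ := lt_min hδ₁ hδ₂
    obtain ⟨n, hn⟩ := exists_nat_gt ((R - r) / δ)
    have hRr : 0 < R - r := sub_pos.mpr hrR
    have hn0 : 0 < n := by
      by_contra hcon
      push_neg at hcon
      interval_cases n
      · simp at hn
        exact absurd hn (not_lt.mpr (le_of_lt (div_pos hRr hδ)))
    have hnR : (0:ℝ) < n := by exact_mod_cast hn0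
    set s : ℝ := (R - r) / n with hsdef
    have hs : 0 < s := div_pos hRr hnR
    have hsδ : s < δ := by
      rw [hsdef, div_lt_iff₀ hnR]
      rw [div_lt_iff₀ hδ] at hn
      nlinarith
    set x : ℕ → ℝ := fun u => r + u * s with hx
    have hxmem : ∀ u : ℕ, u ≤ n → x u ∈ Icc r R := by
      intro u hu
      constructor
      · simp only [hx]
        nlinarith [mul_nonneg (Nat.cast_nonneg (α := ℝ) u) hs.le]
      · simp only [hx]
        have : (u:ℝ) * s ≤ n * s := by
          apply mul_le_mul_of_nonneg_right _ hs.le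
          exact_mod_cast hu
        have hns : (n:ℝ) * s = R - r := by
          rw [hsdef]; field_simp
        linarith
    have hx0 : x 0 = r := by simp [hx]
    have hxn : x n = R := by
      simp only [hx]
      have : (n:ℝ) * s = R - r := by rw [hsdef]; field_simp
      linarith
    -- the labelling
    set ℓ : ℕ → ℕ → ℕ := fun i j =>
      if 0 < W₁ (x i, x j) then 0 else if 0 < W₂ (x i, x j) then 1 else 2 with hℓ
    have hle : ∀ i j, i ≤ n → j ≤ n → ℓ i j ≤ 2 := by
      intro i j _ _
      simp only [hℓ]
      split_ifs <;> omega
    have hleft : ∀ j ≤ n, ℓ 0 j = 0 := by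
      intro j hj
      simp only [hℓ, hx0]
      rw [if_pos (h1r (x j) (hxmem j hj))]
    have hright : ∀ j ≤ n, ℓ n j ≠ 0 := by
      intro j hj
      simp only [hℓ, hxn]
      rw [if_neg (not_lt.mpr (le_of_lt (h1R (x j) (hxmem j hj))))]
      split_ifs <;> omega
    have hbot : ∀ i ≤ n, ℓ i 0 ≤ 1 := by
      intro i hi
      simp only [hℓ, hx0]
      rw [if_pos (h2r (x i) (hxmem i hi))]
      split_ifs <;> omega
    have htop : ∀ i ≤ n, ℓ i n ≠ 1 := by
      intro i hi
      simp only [hℓ, hxn]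
      rw [if_neg (not_lt.mpr (le_of_lt (h2R (x i) (hxmem i hi))))]
      split_ifs <;> omega
    obtain ⟨i, hi, j, hj, a, ha, b, hb, c, hc, hℓa, hℓb, hℓc⟩ :=
      discrete_miranda n hn0 ℓ hle hleft hright hbot htop
    -- corner coordinates
    have hcoord : ∀ p : ℕ×ℕ, p ∈ ({(i,j),(i+1,j),(i+1,j+1),(i,j+1)} : Finset (ℕ×ℕ)) →
        (p.1 = i ∨ p.1 = i + 1) ∧ (p.2 = j ∨ p.2 = j + 1) := by
      intro p hp
      simp only [Finset.mem_insert, Finset.mem_singleton] at hp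
      rcases hp with h | h | h | h <;> subst h <;> simp
    have hxd : ∀ w u u' : ℕ, (u = w ∨ u = w+1) → (u' = w ∨ u' = w+1) →
        dist (x u) (x u') ≤ s := by
      intro w u u' hu hu'
      have key : ∀ w w' : ℕ, w' = w + 1 → dist (x w) (x w') ≤ s := by
        intro w w' hw
        subst hw
        rw [Real.dist_eq]
        have : x w - x (w+1) = -s := by
          simp only [hx]; push_cast; ring
        rw [this, abs_neg, abs_of_nonneg hs.le]
      rcases hu with hu | hu <;> rcases hu' with hu' | hu' <;> subst hu <;> subst hu'
      · simp [hs.le]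
      · exact key _ _ rfl
      · rw [dist_comm]; exact key _ _ rfl
      · simp [hs.le]
    -- distances between corner grid points
    have hdist : ∀ p q : ℕ×ℕ,
        p ∈ ({(i,j),(i+1,j),(i+1,j+1),(i,j+1)} : Finset (ℕ×ℕ)) →
        q ∈ ({(i,j),(i+1,j),(i+1,j+1),(i,j+1)} : Finset (ℕ×ℕ)) →
        dist ((x p.1, x p.2) : ℝ × ℝ) ((x q.1, x q.2) : ℝ × ℝ) < δ := by
      intro p q hp hq
      obtain ⟨hp1, hp2⟩ := hcoord p hp
      obtain ⟨hq1, hq2⟩ := hcoord q hq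
      rw [Prod.dist_eq]
      exact lt_of_le_of_lt (max_le (hxd _ _ _ hp1 hq1) (hxd _ _ _ hp2 hq2)) hsδ
    have hmemK : ∀ p : ℕ×ℕ,
        p ∈ ({(i,j),(i+1,j),(i+1,j+1),(i,j+1)} : Finset (ℕ×ℕ)) →
        ((x p.1, x p.2) : ℝ × ℝ) ∈ K := by
      intro p hp
      obtain ⟨hp1, hp2⟩ := hcoord p hp
      have h1 : p.1 ≤ n := by omega
      have h2 : p.2 ≤ n := by omega
      exact ⟨hxmem _ h1, hxmem _ h2⟩
    have hW1a : 0 < W₁ (x a.1, x a.2) := by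
      by_contra hcon
      simp only [hℓ] at hℓa
      rw [if_neg hcon] at hℓa
      split_ifs at hℓa <;> omega
    have hW1b : W₁ (x b.1, x b.2) ≤ 0 := by
      by_contra hcon
      push_neg at hcon
      simp only [hℓ] at hℓb
      rw [if_pos hcon] at hℓb
      omega
    have hW2b : 0 < W₂ (x b.1, x b.2) := by
      by_contra hcon
      simp only [hℓ] at hℓb
      rw [if_neg hcon] at hℓb
      split_ifs at hℓb <;> omega
    have hW2c : W₂ (x c.1, x c.2) ≤ 0 := by
      by_contra hcon
      push_neg at hcon
      simp only [hℓ] at hℓc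
      rw [if_pos hcon] at hℓc
      split_ifs at hℓc <;> omega
    have d1 : dist (W₁ (x b.1, x b.2)) (W₁ (x a.1, x a.2)) < ε :=
      hu1 _ (hmemK b hb) _ (hmemK a ha)
        (lt_of_lt_of_le (hdist b a hb ha) (min_le_left _ _))
    have d2 : dist (W₂ (x b.1, x b.2)) (W₂ (x c.1, x c.2)) < ε :=
      hu2 _ (hmemK b hb) _ (hmemK c hc)
        (lt_of_lt_of_le (hdist b c hb hc) (min_le_right _ _))
    rw [Real.dist_eq] at d1 d2
    have d1' := abs_lt.mp d1
    have d2' := abs_lt.mp d2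
    refine ⟨(x b.1, x b.2), hmemK b hb, ?_, ?_⟩
    · rw [abs_lt]
      constructor
      · linarith [d1'.1]
      · linarith
    · rw [abs_lt]
      constructor
      · linarith
      · linarith [d2'.2]
  -- Step 2: minimize max |W₁| |W₂| over K
  have hcont : ContinuousOn (fun p => max |W₁ p| |W₂ p|) K :=
    ContinuousOn.sup (continuous_abs.comp_continuousOn hW₁)
      (continuous_abs.comp_continuousOn hW₂)
  obtain ⟨p₀, hp₀K, hp₀min⟩ := hK.exists_isMinOn hKne hcont
  have hzero : max |W₁ p₀| |W₂ p₀| ≤ 0 := by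
    by_contra hcon
    push_neg at hcon
    obtain ⟨p, hpK, h1, h2⟩ := approx _ hcon
    have hm : max |W₁ p| |W₂ p| < max |W₁ p₀| |W₂ p₀| := max_lt h1 h2
    have hm2 : max |W₁ p₀| |W₂ p₀| ≤ max |W₁ p| |W₂ p| := hp₀min hpK
    linarith
  refine ⟨p₀, hp₀K, ?_, ?_⟩
  · have := le_trans (le_max_left |W₁ p₀| |W₂ p₀|) hzero
    have h2 := abs_nonneg (W₁ p₀)
    have : |W₁ p₀| = 0 := le_antisymm this h2
    exact abs_eq_zero.mp this
  · have := le_trans (le_max_right |W₁ p₀| |W₂ p₀|) hzero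
    have h2 := abs_nonneg (W₂ p₀)
    have : |W₂ p₀| = 0 := le_antisymm this h2
    exact abs_eq_zero.mp this
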